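/- arXiv:2102.09338 — 7 statements merged into one kernel-verified Lean document; each statement's English description precedes it below -/
import Mathlib

section
/- For every G-clock constraint φ (a clock constraint all of whose atomic constraints have bounds at most k(x) for each clock x, where k : C → ℕ is the clock ceiling), the negation ¬φ is logically equivalent to a G-clock constraint: there exists a G-clock constraint ψ such that for all valuations u, u ⊨ ψ ↔ ¬(u ⊨ φ). -/
inductive CC (C : Type) : Type where
  | lt (x : C) (n : ℕ)
  | eq (x : C) (n : ℕ)
  | gt (x : C) (n : ℕ)
  | dlt (x y : C) (n : ℕ)
  | deq (x y : C) (n : ℕ)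
  | dgt (x y : C) (n : ℕ)
  | and (φ ψ : CC C)
  | or (φ ψ : CC C)

/-- Satisfaction of a clock constraint by a clock valuation `u : C → ℝ≥0`. -/
def sat {C : Type} (u : C → NNReal) : CC C → Prop
  | .lt x n => (u x : ℝ) < n
  | .eq x n => (u x : ℝ) = n
  | .gt x n => (u x : ℝ) > n
  | .dlt x y n => (u x : ℝ) - (u y : ℝ) < n
  | .deq x y n => (u x : ℝ) - (u y : ℝ) = n
  | .dgt x y n => (u x : ℝ) - (u y : ℝ) > n
  | .and φ ψ => sat u φ ∧ sat u ψ
  | .or φ ψ => sat u φ ∨ sat u ψ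

/-- `shift u δ` increases every clock by `δ`. -/
def shift {C : Type} (u : C → NNReal) (δ : NNReal) : C → NNReal := fun x => u x + δ

open Classical in
/-- `resetVal u r` maps clocks in `r` to `0` and agrees with `u` elsewhere. -/
noncomputable def resetVal {C : Type} (u : C → NNReal) (r : Set C) : C → NNReal :=
  fun x => if x ∈ r then 0 else u x

/-- `Bounded k φ`: all bounds in atomic constraints are at most the clock ceilings,
i.e. `φ` is a `G`-clock constraint. -/
def Bounded {C : Type} (k : C → ℕ) : CC C → Prop
  | .lt x n => n ≤ k x
  | .eq x n => n ≤ k x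
  | .gt x n => n ≤ k x
  | .dlt x _ n => n ≤ k x
  | .deq x _ n => n ≤ k x
  | .dgt x _ n => n ≤ k x
  | .and φ ψ => Bounded k φ ∧ Bounded k ψ
  | .or φ ψ => Bounded k φ ∧ Bounded k ψ

/-- The negation of a G-clock constraint is logically equivalent to a G-clock constraint. -/
theorem neg_equiv_GclockConstraint {C : Type} [Fintype C] (k : C → ℕ) (φ : CC C)
    (hφ : Bounded k φ) :
    ∃ ψ : CC C, Bounded k ψ ∧ ∀ u : C → NNReal, sat u ψ ↔ ¬ sat u φ := by
  induction φ with
  | lt x n =>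
    exact ⟨.or (.eq x n) (.gt x n), ⟨hφ, hφ⟩, fun u => by
      simp only [sat]; constructor
      · rintro (h | h) h' <;> linarith
      · intro h; rcases lt_trichotomy ((u x : ℝ)) n with h' | h' | h'
        · exact absurd h' h
        · exact Or.inl h'
        · exact Or.inr h'⟩
  | eq x n =>
    exact ⟨.or (.lt x n) (.gt x n), ⟨hφ, hφ⟩, fun u => by
      simp only [sat]; constructor
      · rintro (h | h) h' <;> linarith
      · intro h; rcases lt_trichotomy ((u x : ℝ)) n with h' | h' | h'
        · exact Or.inl h'
        · exact absurd h' h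
        · exact Or.inr h'⟩
  | gt x n =>
    exact ⟨.or (.lt x n) (.eq x n), ⟨hφ, hφ⟩, fun u => by
      simp only [sat]; constructor
      · rintro (h | h) h' <;> linarith
      · intro h; rcases lt_trichotomy ((u x : ℝ)) n with h' | h' | h'
        · exact Or.inl h'
        · exact Or.inr h'
        · exact absurd h' h⟩
  | dlt x y n =>
    exact ⟨.or (.deq x y n) (.dgt x y n), ⟨hφ, hφ⟩, fun u => by
      simp only [sat]; constructor
      · rintro (h | h) h' <;> linarith
      · intro h; rcases lt_trichotomy ((u x : ℝ) - u y) n with h' | h' | h'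
        · exact absurd h' h
        · exact Or.inl h'
        · exact Or.inr h'⟩
  | deq x y n =>
    exact ⟨.or (.dlt x y n) (.dgt x y n), ⟨hφ, hφ⟩, fun u => by
      simp only [sat]; constructor
      · rintro (h | h) h' <;> linarith
      · intro h; rcases lt_trichotomy ((u x : ℝ) - u y) n with h' | h' | h'
        · exact Or.inl h'
        · exact absurd h' h
        · exact Or.inr h'⟩
  | dgt x y n =>
    exact ⟨.or (.dlt x y n) (.deq x y n), ⟨hφ, hφ⟩, fun u => by
      simp only [sat]; constructor
      · rintro (h | h) h' <;> linarith
      · intro h; rcases lt_trichotomy ((u x : ℝ) - u y) n with h' | h' | h'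
        · exact Or.inl h'
        · exact Or.inr h'
        · exact absurd h' h⟩
  | and φ₁ φ₂ ih₁ ih₂ =>
    obtain ⟨ψ₁, hb₁, h₁⟩ := ih₁ hφ.1
    obtain ⟨ψ₂, hb₂, h₂⟩ := ih₂ hφ.2
    exact ⟨.or ψ₁ ψ₂, ⟨hb₁, hb₂⟩, fun u => by
      simp only [sat, h₁, h₂]; tauto⟩
  | or φ₁ φ₂ ih₁ ih₂ =>
    obtain ⟨ψ₁, hb₁, h₁⟩ := ih₁ hφ.1
    obtain ⟨ψ₂, hb₂, h₂⟩ := ih₂ hφ.2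
    exact ⟨.and ψ₁ ψ₂, ⟨hb₁, hb₂⟩, fun u => by
      simp only [sat, h₁, h₂]; tauto⟩
end

section
/- For every G-clock constraint φ and every reset set r ⊆ C, the formula φ[r] obtained by substituting 0 for every clock in r is logically equivalent to a G-clock constraint: there exists a G-clock constraint ψ such that for all valuations u, u ⊨ φ[r] ↔ u ⊨ ψ, where u ⊨ φ[r] means u[r] ⊨ φ and u[r] is the valuation mapping clocks in r to 0 and agreeing with u elsewhere. -/
lemma trueCC_sat {C : Type} (x : C) (u : C → NNReal) : sat u (.deq x x 0) := by
  simp [sat]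

lemma falseCC_sat {C : Type} (x : C) (u : C → NNReal) : ¬ sat u (.dgt x x 0) := by
  simp [sat]

/-- The reset update of a G-clock constraint is logically equivalent to a G-clock constraint. -/
theorem reset_equiv_GclockConstraint {C : Type} [Fintype C] (k : C → ℕ) (φ : CC C)
    (hφ : Bounded k φ) (r : Set C) :
    ∃ ψ : CC C, Bounded k ψ ∧ ∀ u : C → NNReal, sat (resetVal u r) φ ↔ sat u ψ := by
  classical
  induction φ with
  | lt x n =>
    by_cases hx : x ∈ r
    · by_cases hn : n = 0
      · exact ⟨.dgt x x 0, Nat.zero_le _, fun u => by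
          simp [sat, resetVal, hx, hn]⟩
      · exact ⟨.deq x x 0, Nat.zero_le _, fun u => by
          simp [sat, resetVal, hx, Nat.pos_of_ne_zero hn]⟩
    · exact ⟨.lt x n, hφ, fun u => by simp [sat, resetVal, hx]⟩
  | eq x n =>
    by_cases hx : x ∈ r
    · by_cases hn : n = 0
      · exact ⟨.deq x x 0, Nat.zero_le _, fun u => by
          simp [sat, resetVal, hx, hn]⟩
      · exact ⟨.dgt x x 0, Nat.zero_le _, fun u => by
          simp [sat, resetVal, hx]
          exact fun h => hn (by exact_mod_cast h.symm)⟩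
    · exact ⟨.eq x n, hφ, fun u => by simp [sat, resetVal, hx]⟩
  | gt x n =>
    by_cases hx : x ∈ r
    · exact ⟨.dgt x x 0, Nat.zero_le _, fun u => by
        simp [sat, resetVal, hx]⟩
    · exact ⟨.gt x n, hφ, fun u => by simp [sat, resetVal, hx]⟩
  | dlt x y n =>
    by_cases hx : x ∈ r <;> by_cases hy : y ∈ r
    · by_cases hn : n = 0
      · exact ⟨.dgt x x 0, Nat.zero_le _, fun u => by
          simp [sat, resetVal, hx, hy, hn]⟩
      · exact ⟨.deq x x 0, Nat.zero_le _, fun u => by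
          simp [sat, resetVal, hx, hy, Nat.pos_of_ne_zero hn]⟩
    · by_cases hn : n = 0
      · exact ⟨.gt y 0, Nat.zero_le _, fun u => by
          simp [sat, resetVal, hx, hy, hn]⟩
      · exact ⟨.deq x x 0, Nat.zero_le _, fun u => by
          simp [sat, resetVal, hx, hy]
          calc -(u y : ℝ) ≤ 0 := neg_nonpos.mpr (u y).coe_nonneg
            _ < n := by exact_mod_cast Nat.pos_of_ne_zero hn⟩
    · exact ⟨.lt x n, hφ, fun u => by simp [sat, resetVal, hx, hy]⟩
    · exact ⟨.dlt x y n, hφ, fun u => by simp [sat, resetVal, hx, hy]⟩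
  | deq x y n =>
    by_cases hx : x ∈ r <;> by_cases hy : y ∈ r
    · by_cases hn : n = 0
      · exact ⟨.deq x x 0, Nat.zero_le _, fun u => by
          simp [sat, resetVal, hx, hy, hn]⟩
      · exact ⟨.dgt x x 0, Nat.zero_le _, fun u => by
          simp [sat, resetVal, hx, hy]
          exact fun h => hn (by exact_mod_cast h.symm)⟩
    · by_cases hn : n = 0
      · exact ⟨.eq y 0, Nat.zero_le _, fun u => by
          simp [sat, resetVal, hx, hy, hn]⟩
      · refine ⟨.dgt x x 0, Nat.zero_le _, fun u => by
          simp [sat, resetVal, hx, hy]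
          intro h
          have h1 : (0:ℝ) ≤ n := by positivity
          have h2 : -(u y : ℝ) ≤ 0 := neg_nonpos.mpr (u y).coe_nonneg
          have : (n:ℝ) = 0 := le_antisymm (h ▸ h2) h1
          exact hn (by exact_mod_cast this)⟩
    · exact ⟨.eq x n, hφ, fun u => by simp [sat, resetVal, hx, hy]⟩
    · exact ⟨.deq x y n, hφ, fun u => by simp [sat, resetVal, hx, hy]⟩
  | dgt x y n =>
    by_cases hx : x ∈ r <;> by_cases hy : y ∈ r
    · exact ⟨.dgt x x 0, Nat.zero_le _, fun u => by
        simp [sat, resetVal, hx, hy]⟩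
    · exact ⟨.dgt x x 0, Nat.zero_le _, fun u => by
        simp [sat, resetVal, hx, hy]
        calc -(u y : ℝ) ≤ 0 := neg_nonpos.mpr (u y).coe_nonneg
          _ ≤ n := by positivity⟩
    · exact ⟨.gt x n, hφ, fun u => by simp [sat, resetVal, hx, hy]⟩
    · exact ⟨.dgt x y n, hφ, fun u => by simp [sat, resetVal, hx, hy]⟩
  | and φ₁ φ₂ ih1 ih2 =>
    obtain ⟨ψ₁, hb1, h1⟩ := ih1 hφ.1
    obtain ⟨ψ₂, hb2, h2⟩ := ih2 hφ.2
    exact ⟨.and ψ₁ ψ₂, ⟨hb1, hb2⟩, fun u => by simp [sat, h1 u, h2 u]⟩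
  | or φ₁ φ₂ ih1 ih2 =>
    obtain ⟨ψ₁, hb1, h1⟩ := ih1 hφ.1
    obtain ⟨ψ₂, hb2, h2⟩ := ih2 hφ.2
    exact ⟨.or ψ₁ ψ₂, ⟨hb1, hb2⟩, fun u => by simp [sat, h1 u, h2 u]⟩
end

section
/- Time-successor mimicking between region-equivalent valuations: if u₁ and u₂ lie in the same extended clock region, and u₁ + Δ₁ lies in region r for some Δ₁ ∈ ℝ≥0, then there exists Δ₂ ∈ ℝ≥0 such that u₂ + Δ₂ lies in region r. -/
/-- Two valuations lie in the same extended clock region: each clock's value compares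
identically with every integer up to its ceiling, and each difference of two distinct
clocks compares identically with every relevant integer. -/
def RegionEquiv {C : Type} (k : C → ℕ) (u₁ u₂ : C → NNReal) : Prop :=
  (∀ x : C, ∀ n : ℕ, n ≤ k x →
    (((u₁ x : ℝ) < n) ↔ ((u₂ x : ℝ) < n)) ∧
    (((u₁ x : ℝ) = n) ↔ ((u₂ x : ℝ) = n)) ∧
    (((u₁ x : ℝ) > n) ↔ ((u₂ x : ℝ) > n))) ∧
  (∀ x y : C, x ≠ y → ∀ m : ℤ, -(k x : ℤ) ≤ m → m ≤ (k y : ℤ) →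
    (((u₁ y : ℝ) - (u₁ x : ℝ) < (m : ℝ)) ↔ ((u₂ y : ℝ) - (u₂ x : ℝ) < (m : ℝ))) ∧
    (((u₁ y : ℝ) - (u₁ x : ℝ) = (m : ℝ)) ↔ ((u₂ y : ℝ) - (u₂ x : ℝ) = (m : ℝ))) ∧
    (((u₁ y : ℝ) - (u₁ x : ℝ) > (m : ℝ)) ↔ ((u₂ y : ℝ) - (u₂ x : ℝ) > (m : ℝ))))

theorem regionEquiv_shift_single {C : Type} [Fintype C] (k : C → ℕ)
    (u₁ u₂ : C → NNReal) (h : RegionEquiv k u₁ u₂) (Δ₁ : NNReal) :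
    ∃ Δ₂ : NNReal, ∀ x : C, ∀ n : ℕ, n ≤ k x →
      (((u₁ x : ℝ) + (Δ₁ : ℝ) < n) ↔ ((u₂ x : ℝ) + (Δ₂ : ℝ) < n)) ∧
      (((u₁ x : ℝ) + (Δ₁ : ℝ) = n) ↔ ((u₂ x : ℝ) + (Δ₂ : ℝ) = n)) ∧
      (((u₁ x : ℝ) + (Δ₁ : ℝ) > n) ↔ ((u₂ x : ℝ) + (Δ₂ : ℝ) > n)) := by
  classical
  obtain ⟨h1, h2⟩ := h
  have hΔ1 : (0:ℝ) ≤ (Δ₁:ℝ) := Δ₁.coe_nonneg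
  by_cases hint : ∃ x₀, ∃ m : ℕ, m ≤ k x₀ ∧ (u₁ x₀ : ℝ) + (Δ₁ : ℝ) = m
  · -- Case 1: some clock hits an integer value within its ceiling
    obtain ⟨x₀, m, hmk, hm⟩ := hint
    have hu1 : (u₁ x₀ : ℝ) ≤ m := by linarith
    have hu2 : (u₂ x₀ : ℝ) ≤ m := by
      by_contra hc
      push_neg at hc
      have := ((h1 x₀ m hmk).2.2).mpr hc
      linarith
    refine ⟨Real.toNNReal ((m:ℝ) - u₂ x₀), ?_⟩
    have hco : ((Real.toNNReal ((m:ℝ) - u₂ x₀) : NNReal) : ℝ) = (m:ℝ) - u₂ x₀ :=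
      Real.coe_toNNReal _ (by linarith)
    intro y n hn
    rw [hco]
    by_cases hxy : y = x₀
    · subst hxy
      rw [hm]
      have e : (u₂ y:ℝ) + ((m:ℝ) - u₂ y) = (m:ℝ) := by ring
      rw [e]
      exact ⟨Iff.rfl, Iff.rfl, Iff.rfl⟩
    · have hne : x₀ ≠ y := fun hh => hxy hh.symm
      have hM1 : -(k x₀ : ℤ) ≤ (n:ℤ) - m := by
        have : (m:ℤ) ≤ k x₀ := by exact_mod_cast hmk
        omega
      have hM2 : (n:ℤ) - m ≤ (k y : ℤ) := by
        have : (n:ℤ) ≤ k y := by exact_mod_cast hn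
        omega
      obtain ⟨i1, i2, i3⟩ := h2 x₀ y hne ((n:ℤ) - m) hM1 hM2
      have ec : (((n:ℤ) - (m:ℤ) : ℤ) : ℝ) = (n:ℝ) - m := by push_cast; ring
      rw [ec] at i1 i2 i3
      refine ⟨⟨fun hh => ?_, fun hh => ?_⟩, ⟨fun hh => ?_, fun hh => ?_⟩,
        ⟨fun hh => ?_, fun hh => ?_⟩⟩
      · have := i1.mp (by linarith); linarith
      · have := i1.mpr (by linarith); linarith
      · have := i2.mp (by linarith); linarith
      · have := i2.mpr (by linarith); linarith
      · have := i3.mp (by linarith); linarith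
      · have := i3.mpr (by linarith); linarith
  · by_cases hS : ∃ y, (u₁ y : ℝ) + (Δ₁:ℝ) ≤ k y
    · -- Case 2: some clock is within range, and none hits an integer
      push_neg at hint
      have hCne : Nonempty C := ⟨hS.choose⟩
      have hUne : (Finset.univ : Finset C).Nonempty := Finset.univ_nonempty
      -- facts about floors for in-range clocks
      have hfrac : ∀ y : C, (u₁ y : ℝ) + (Δ₁:ℝ) ≤ k y →
          ((⌊(u₁ y : ℝ) + (Δ₁:ℝ)⌋ : ℝ) < (u₁ y : ℝ) + (Δ₁:ℝ) ∧
           (u₁ y : ℝ) + (Δ₁:ℝ) < (⌊(u₁ y : ℝ) + (Δ₁:ℝ)⌋ : ℝ) + 1 ∧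
           ⌊(u₁ y : ℝ) + (Δ₁:ℝ)⌋ + 1 ≤ (k y : ℤ) ∧ 0 ≤ ⌊(u₁ y : ℝ) + (Δ₁:ℝ)⌋) := by
        intro y hy
        set a : ℝ := (u₁ y : ℝ) + (Δ₁:ℝ) with hadef
        have h0 : (0:ℝ) ≤ a := add_nonneg (u₁ y).coe_nonneg Δ₁.coe_nonneg
        have hfl0 : 0 ≤ ⌊a⌋ := Int.floor_nonneg.mpr h0
        have hfle : (⌊a⌋ : ℝ) ≤ a := Int.floor_le a
        have hlt1 : a < (⌊a⌋ : ℝ) + 1 := Int.lt_floor_add_one a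
        have hflk : ⌊a⌋ ≤ (k y : ℤ) := by
          have : (⌊a⌋ : ℝ) ≤ (k y : ℝ) := le_trans hfle hy
          exact_mod_cast this
        have hne1 : (⌊a⌋ : ℝ) ≠ a := by
          intro he
          refine hint y ⌊a⌋.toNat ?_ ?_
          · omega
          · have hcc : ((⌊a⌋.toNat : ℕ) : ℝ) = (⌊a⌋ : ℝ) := by
              exact_mod_cast Int.toNat_of_nonneg hfl0
            rw [hcc]
            exact he.symm
        have hne2 : a ≠ (k y : ℝ) := by
          intro he
          exact hint y (k y) le_rfl he
        have hstrict : (⌊a⌋ : ℝ) < a := lt_of_le_of_ne hfle hne1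
        have hak : a < (k y : ℝ) := lt_of_le_of_ne hy hne2
        have hfk : ⌊a⌋ < (k y : ℤ) := by
          have : (⌊a⌋ : ℝ) < (k y : ℝ) := lt_of_le_of_lt hfle hak
          exact_mod_cast this
        exact ⟨hstrict, hlt1, by omega, hfl0⟩
      -- lower and upper bound functions for Δ₂
      set L : C → ℝ := fun y => if (u₁ y : ℝ) + (Δ₁:ℝ) ≤ k y
        then (⌊(u₁ y : ℝ) + (Δ₁:ℝ)⌋ : ℝ) - u₂ y else (k y : ℝ) - u₂ y with hLdef
      set U : C → ℝ := fun y => (⌊(u₁ y : ℝ) + (Δ₁:ℝ)⌋ : ℝ) + 1 - u₂ y with hUdef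
      set S : Finset C := Finset.univ.filter (fun y => (u₁ y : ℝ) + (Δ₁:ℝ) ≤ k y) with hSdef
      have hSne : S.Nonempty := ⟨hS.choose, by simp [hSdef, hS.choose_spec]⟩
      have key : ∀ y y' : C, (u₁ y' : ℝ) + (Δ₁:ℝ) ≤ k y' → L y < U y' := by
        intro y y' hy'
        obtain ⟨ha', hb', hc', hd'⟩ := hfrac y' hy'
        simp only [hUdef]
        by_cases hyy : y = y'
        · subst hyy
          simp only [hLdef, if_pos hy']
          linarith
        · by_cases hy : (u₁ y : ℝ) + (Δ₁:ℝ) ≤ k y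
          · obtain ⟨ha, hb, hc, hd⟩ := hfrac y hy
            simp only [hLdef, if_pos hy]
            set M : ℤ := ⌊(u₁ y' : ℝ) + (Δ₁:ℝ)⌋ + 1 - ⌊(u₁ y : ℝ) + (Δ₁:ℝ)⌋ with hMdef
            have hM1 : -(k y : ℤ) ≤ M := by omega
            have hM2 : M ≤ (k y' : ℤ) := by omega
            have hlt : (u₁ y' : ℝ) - u₁ y < (M : ℝ) := by
              have hMc : (M : ℝ) = (⌊(u₁ y' : ℝ) + (Δ₁:ℝ)⌋ : ℝ) + 1
                  - (⌊(u₁ y : ℝ) + (Δ₁:ℝ)⌋ : ℝ) := by push_cast [hMdef]; ring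
              rw [hMc]; linarith
            have := (h2 y y' hyy M hM1 hM2).1.mp hlt
            have hMc : (M : ℝ) = (⌊(u₁ y' : ℝ) + (Δ₁:ℝ)⌋ : ℝ) + 1
                - (⌊(u₁ y : ℝ) + (Δ₁:ℝ)⌋ : ℝ) := by push_cast [hMdef]; ring
            rw [hMc] at this
            linarith
          · simp only [hLdef, if_neg hy]
            push_neg at hy
            set M : ℤ := ⌊(u₁ y' : ℝ) + (Δ₁:ℝ)⌋ + 1 - (k y : ℤ) with hMdef
            have hM1 : -(k y : ℤ) ≤ M := by omega
            have hM2 : M ≤ (k y' : ℤ) := by omega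
            have hlt : (u₁ y' : ℝ) - u₁ y < (M : ℝ) := by
              have hMc : (M : ℝ) = (⌊(u₁ y' : ℝ) + (Δ₁:ℝ)⌋ : ℝ) + 1 - (k y : ℝ) := by
                push_cast [hMdef]; ring
              rw [hMc]; linarith
            have := (h2 y y' hyy M hM1 hM2).1.mp hlt
            have hMc : (M : ℝ) = (⌊(u₁ y' : ℝ) + (Δ₁:ℝ)⌋ : ℝ) + 1 - (k y : ℝ) := by
              push_cast [hMdef]; ring
            rw [hMc] at this
            linarith
      have key0 : ∀ y' : C, (u₁ y' : ℝ) + (Δ₁:ℝ) ≤ k y' → 0 < U y' := by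
        intro y' hy'
        obtain ⟨ha', hb', hc', hd'⟩ := hfrac y' hy'
        have hn : ⌊(u₁ y' : ℝ) + (Δ₁:ℝ)⌋.toNat + 1 ≤ k y' := by omega
        have hcast : ((⌊(u₁ y' : ℝ) + (Δ₁:ℝ)⌋.toNat + 1 : ℕ) : ℝ)
            = (⌊(u₁ y' : ℝ) + (Δ₁:ℝ)⌋ : ℝ) + 1 := by
          have hcc : ((⌊(u₁ y' : ℝ) + (Δ₁:ℝ)⌋.toNat : ℕ) : ℝ)
              = (⌊(u₁ y' : ℝ) + (Δ₁:ℝ)⌋ : ℝ) := by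
            exact_mod_cast Int.toNat_of_nonneg hd'
          push_cast
          rw [hcc]
        have hu1 : (u₁ y' : ℝ) < (⌊(u₁ y' : ℝ) + (Δ₁:ℝ)⌋ : ℝ) + 1 := by linarith
        have := (h1 y' (⌊(u₁ y' : ℝ) + (Δ₁:ℝ)⌋.toNat + 1) hn).1.mp (by rw [hcast]; exact hu1)
        rw [hcast] at this
        simp only [hUdef]
        linarith
      set A : ℝ := max 0 (Finset.univ.sup' hUne L) with hA
      set B : ℝ := S.inf' hSne U with hB
      have hmemS : ∀ y : C, y ∈ S ↔ (u₁ y : ℝ) + (Δ₁:ℝ) ≤ k y := by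
        intro y; simp [hSdef]
      have hAB : A < B := by
        rw [hA]
        apply max_lt
        · rw [hB, Finset.lt_inf'_iff]
          intro y' hy'
          exact key0 y' ((hmemS y').mp hy')
        · rw [Finset.sup'_lt_iff]
          intro y _
          rw [hB, Finset.lt_inf'_iff]
          intro y' hy'
          exact key y y' ((hmemS y').mp hy')
      have hA0 : (0:ℝ) ≤ A := le_max_left _ _
      have hpos : (0:ℝ) ≤ (A + B) / 2 := by linarith
      refine ⟨Real.toNNReal ((A + B) / 2), ?_⟩
      have hco : ((Real.toNNReal ((A + B) / 2) : NNReal) : ℝ) = (A + B) / 2 :=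
        Real.coe_toNNReal _ hpos
      intro y n hn
      rw [hco]
      have hlo : L y < (A + B) / 2 := by
        have h1' : L y ≤ Finset.univ.sup' hUne L := Finset.le_sup' L (Finset.mem_univ y)
        have h2' : Finset.univ.sup' hUne L ≤ A := le_max_right _ _
        linarith
      by_cases hy : (u₁ y : ℝ) + (Δ₁:ℝ) ≤ k y
      · have hBle : B ≤ U y := Finset.inf'_le U ((hmemS y).mpr hy)
        have hhalf : (A + B) / 2 < B := by linarith
        have hhi : (A + B) / 2 < U y := lt_of_lt_of_le hhalf hBle
        obtain ⟨ha, hb, hc, hd⟩ := hfrac y hy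
        have hLy : L y = (⌊(u₁ y : ℝ) + (Δ₁:ℝ)⌋ : ℝ) - u₂ y := by
          simp only [hLdef, if_pos hy]
        have hUy : U y = (⌊(u₁ y : ℝ) + (Δ₁:ℝ)⌋ : ℝ) + 1 - u₂ y := by
          simp only [hUdef]
        rw [hLy] at hlo
        rw [hUy] at hhi
        rcases le_or_gt (n : ℤ) ⌊(u₁ y : ℝ) + (Δ₁:ℝ)⌋ with hcase | hcase
        · have hnr : (n:ℝ) ≤ (⌊(u₁ y : ℝ) + (Δ₁:ℝ)⌋ : ℝ) := by exact_mod_cast hcase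
          exact ⟨iff_of_false (by linarith) (by linarith),
            iff_of_false (by linarith) (by linarith),
            iff_of_true (by linarith) (by linarith)⟩
        · have hnr : (⌊(u₁ y : ℝ) + (Δ₁:ℝ)⌋ : ℝ) + 1 ≤ (n:ℝ) := by
            have : ⌊(u₁ y : ℝ) + (Δ₁:ℝ)⌋ + 1 ≤ (n:ℤ) := by omega
            exact_mod_cast this
          exact ⟨iff_of_true (by linarith) (by linarith),
            iff_of_false (by linarith) (by linarith),
            iff_of_false (by linarith) (by linarith)⟩
      · push_neg at hy
        have hLy : L y = (k y : ℝ) - u₂ y := by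
          simp only [hLdef, if_neg (not_le.mpr hy)]
        rw [hLy] at hlo
        have hnr : (n:ℝ) ≤ (k y : ℝ) := by exact_mod_cast hn
        exact ⟨iff_of_false (by linarith) (by linarith),
          iff_of_false (by linarith) (by linarith),
          iff_of_true (by linarith) (by linarith)⟩
    · -- Case 3: all clocks beyond their ceilings
      push_neg at hS
      refine ⟨(Finset.univ.sup k : ℕ) + 1, ?_⟩
      intro y n hn
      have hky : (k y : ℝ) < (u₁ y : ℝ) + (Δ₁:ℝ) := hS y
      have hsup : k y ≤ Finset.univ.sup k := Finset.le_sup (Finset.mem_univ y)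
      have hc : ((((Finset.univ.sup k : ℕ) : NNReal) + 1 : NNReal) : ℝ)
          = ((Finset.univ.sup k : ℕ) : ℝ) + 1 := by
        rw [NNReal.coe_add, NNReal.coe_natCast, NNReal.coe_one]
      rw [hc]
      have hsr : (k y : ℝ) ≤ ((Finset.univ.sup k : ℕ) : ℝ) := by exact_mod_cast hsup
      have hnr : (n:ℝ) ≤ (k y : ℝ) := by exact_mod_cast hn
      have hu2 : (0:ℝ) ≤ (u₂ y : ℝ) := (u₂ y).coe_nonneg
      exact ⟨iff_of_false (by linarith) (by linarith),
        iff_of_false (by linarith) (by linarith),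
        iff_of_true (by linarith) (by linarith)⟩

/-- Time-successor mimicking: if u₁ and u₂ are region-equivalent and u₁ + Δ₁ lies in some
region, then some time successor u₂ + Δ₂ of u₂ lies in the same region. -/
theorem regionEquiv_time_successor {C : Type} [Fintype C] (k : C → ℕ)
    (u₁ u₂ : C → NNReal) (h : RegionEquiv k u₁ u₂) (Δ₁ : NNReal) :
    ∃ Δ₂ : NNReal, RegionEquiv k (shift u₁ Δ₁) (shift u₂ Δ₂) := by
  obtain ⟨Δ₂, hΔ⟩ := regionEquiv_shift_single k u₁ u₂ h Δ₁
  refine ⟨Δ₂, fun x n hn => ?_, fun x y hxy m hm1 hm2 => ?_⟩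
  · have := hΔ x n hn
    simpa [shift, NNReal.coe_add] using this
  · have := h.2 x y hxy m hm1 hm2
    have e₁ : ((shift u₁ Δ₁ y : NNReal) : ℝ) - ((shift u₁ Δ₁ x : NNReal) : ℝ)
        = (u₁ y : ℝ) - u₁ x := by
      simp only [shift, NNReal.coe_add]; ring
    have e₂ : ((shift u₂ Δ₂ y : NNReal) : ℝ) - ((shift u₂ Δ₂ x : NNReal) : ℝ)
        = (u₂ y : ℝ) - u₂ x := by
      simp only [shift, NNReal.coe_add]; ring
    rw [e₁, e₂]
    exact this
end

section
/- Δ-time invariance: for G-clock constraints φ₁ and φ₂, the predicate Φ(u) := ∃Δ ∈ ℝ≥0, (u+Δ ⊨ φ₁) ∧ ∀δ ∈ [0,Δ], (u+δ ⊨ φ₂) is invariant under extended-region equivalence: if u₁ and u₂ lie in the same extended clock region, then Φ(u₁) ↔ Φ(u₂). -/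
section DeltaAux

variable {C : Type} [Fintype C]

/-- Trichotomy match between the pair `(a,c)` and the pair `(b,d)`. -/
def Tri (a b c d : ℝ) : Prop := (a < c ↔ b < d) ∧ (a = c ↔ b = d) ∧ (c < a ↔ d < b)

lemma tri_of {a b c d : ℝ} (h1 : a < c ↔ b < d) (h2 : a = c ↔ b = d) : Tri a b c d := by
  refine ⟨h1, h2, ?_⟩
  constructor
  · intro hc
    rcases lt_trichotomy b d with hb | hb | hb
    · exact absurd (h1.mpr hb) (by linarith)
    · exact absurd (h2.mpr hb) (by linarith)
    · exact hb
  · intro hd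
    rcases lt_trichotomy a c with ha | ha | ha
    · exact absurd (h1.mp ha) (by linarith)
    · exact absurd (h2.mp ha) (by linarith)
    · exact ha

/-- The "event time" of label `p = (x, n)` for valuation `u`: the delay after which
clock `x` reaches value `n`. -/
def fval (u : C → NNReal) (p : C × ℕ) : ℝ := (p.2 : ℝ) - (u p.1 : ℝ)

/-- Delays `r` (for `u₁`) and `s` (for `u₂`) have the same position relative to all
relevant event times. -/
def MatchD (k : C → ℕ) (u₁ u₂ : C → NNReal) (r s : ℝ) : Prop :=
  ∀ p : C × ℕ, p.2 ≤ k p.1 → Tri r s (fval u₁ p) (fval u₂ p)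

lemma sat_iff {k : C → ℕ} {v₁ v₂ : C → NNReal} (h : RegionEquiv k v₁ v₂) :
    ∀ φ : CC C, Bounded k φ → (sat v₁ φ ↔ sat v₂ φ) := by
  intro φ
  induction φ with
  | lt x n => intro hb; exact (h.1 x n hb).1
  | eq x n => intro hb; exact (h.1 x n hb).2.1
  | gt x n => intro hb; exact (h.1 x n hb).2.2
  | dlt x y n =>
    intro hb
    by_cases hxy : x = y
    · subst hxy; simp [sat]
    · have h' := (h.2 y x (Ne.symm hxy) (n : ℤ) (by omega) (by exact_mod_cast hb)).1
      push_cast at h'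
      simpa [sat] using h'
  | deq x y n =>
    intro hb
    by_cases hxy : x = y
    · subst hxy; simp [sat]
    · have h' := (h.2 y x (Ne.symm hxy) (n : ℤ) (by omega) (by exact_mod_cast hb)).2.1
      push_cast at h'
      simpa [sat] using h'
  | dgt x y n =>
    intro hb
    by_cases hxy : x = y
    · subst hxy; simp [sat]
    · have h' := (h.2 y x (Ne.symm hxy) (n : ℤ) (by omega) (by exact_mod_cast hb)).2.2
      push_cast at h'
      simpa [sat] using h'
  | and φ ψ ihφ ihψ => intro hb; exact and_congr (ihφ hb.1) (ihψ hb.2)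
  | or φ ψ ihφ ihψ => intro hb; exact or_congr (ihφ hb.1) (ihψ hb.2)

lemma regionEquiv_symm {k : C → ℕ} {u₁ u₂ : C → NNReal} (h : RegionEquiv k u₁ u₂) :
    RegionEquiv k u₂ u₁ :=
  ⟨fun x n hn => ⟨(h.1 x n hn).1.symm, (h.1 x n hn).2.1.symm, (h.1 x n hn).2.2.symm⟩,
   fun x y hxy m h1 h2 =>
    ⟨(h.2 x y hxy m h1 h2).1.symm, (h.2 x y hxy m h1 h2).2.1.symm,
     (h.2 x y hxy m h1 h2).2.2.symm⟩⟩

lemma regionEquiv_shift {k : C → ℕ} {u₁ u₂ : C → NNReal} (h : RegionEquiv k u₁ u₂)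
    {δ δ' : NNReal} (hm : MatchD k u₁ u₂ (δ : ℝ) (δ' : ℝ)) :
    RegionEquiv k (shift u₁ δ) (shift u₂ δ') := by
  constructor
  · intro x n hn
    obtain ⟨t1, t2, t3⟩ := hm (x, n) hn
    simp only [fval] at t1 t2 t3
    have e1 : ((shift u₁ δ x : ℝ)) = (u₁ x : ℝ) + (δ : ℝ) := by
      simp [shift]
    have e2 : ((shift u₂ δ' x : ℝ)) = (u₂ x : ℝ) + (δ' : ℝ) := by
      simp [shift]
    refine ⟨?_, ?_, ?_⟩
    · rw [e1, e2]; constructor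
      · intro hh; have := t1.mp (by linarith); linarith
      · intro hh; have := t1.mpr (by linarith); linarith
    · rw [e1, e2]; constructor
      · intro hh; have := t2.mp (by linarith); linarith
      · intro hh; have := t2.mpr (by linarith); linarith
    · rw [e1, e2]; constructor
      · intro hh; have := t3.mp (by linarith); linarith
      · intro hh; have := t3.mpr (by linarith); linarith
  · intro x y hxy m h1 h2
    have e1 : ((shift u₁ δ y : ℝ)) - ((shift u₁ δ x : ℝ)) = (u₁ y : ℝ) - (u₁ x : ℝ) := by
      simp only [shift, NNReal.coe_add]; ring
    have e2 : ((shift u₂ δ' y : ℝ)) - ((shift u₂ δ' x : ℝ)) = (u₂ y : ℝ) - (u₂ x : ℝ) := by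
      simp only [shift, NNReal.coe_add]; ring
    rw [e1, e2]
    exact h.2 x y hxy m h1 h2

lemma ord' {k : C → ℕ} {u₁ u₂ : C → NNReal} (h : RegionEquiv k u₁ u₂)
    {p q : C × ℕ} (hp : p.2 ≤ k p.1) (hq : q.2 ≤ k q.1) :
    (fval u₁ p < fval u₁ q ↔ fval u₂ p < fval u₂ q) ∧
    (fval u₁ p = fval u₁ q ↔ fval u₂ p = fval u₂ q) := by
  obtain ⟨x, n⟩ := p
  obtain ⟨y, m⟩ := q
  simp only at hp hq
  simp only [fval]
  by_cases hxy : x = y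
  · subst hxy
    constructor
    · constructor <;> intro hh <;> [skip; skip] <;>
        · have : (n : ℝ) < m := by linarith
          linarith
    · constructor <;> intro hh <;>
        · have : (n : ℝ) = m := by linarith
          linarith
  · have key := h.2 x y hxy ((m : ℤ) - (n : ℤ)) (by omega) (by omega)
    obtain ⟨k1, k2, _⟩ := key
    push_cast at k1 k2
    constructor
    · constructor
      · intro hh; have := k1.mp (by linarith); linarith
      · intro hh; have := k1.mpr (by linarith); linarith
    · constructor
      · intro hh; have := k2.mp (by linarith); linarith
      · intro hh; have := k2.mpr (by linarith); linarith

lemma zero' {k : C → ℕ} {u₁ u₂ : C → NNReal} (h : RegionEquiv k u₁ u₂)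
    {p : C × ℕ} (hp : p.2 ≤ k p.1) :
    (fval u₁ p < 0 ↔ fval u₂ p < 0) ∧ (fval u₁ p = 0 ↔ fval u₂ p = 0) ∧
    (0 < fval u₁ p ↔ 0 < fval u₂ p) := by
  obtain ⟨x, n⟩ := p
  simp only at hp
  obtain ⟨l, e, g⟩ := h.1 x n hp
  simp only [fval]
  refine ⟨?_, ?_, ?_⟩
  · constructor
    · intro hh; have := g.mp (by linarith); linarith
    · intro hh; have := g.mpr (by linarith); linarith
  · constructor
    · intro hh; have := e.mp (by linarith); linarith
    · intro hh; have := e.mpr (by linarith); linarith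
  · constructor
    · intro hh; have := l.mp (by linarith); linarith
    · intro hh; have := l.mpr (by linarith); linarith

/-- The finite set of relevant labels. -/
def LP (k : C → ℕ) : Finset (C × ℕ) :=
  (Finset.univ ×ˢ Finset.range (Finset.univ.sup k + 1)).filter (fun p => p.2 ≤ k p.1)

lemma mem_LP {k : C → ℕ} {p : C × ℕ} (hp : p.2 ≤ k p.1) : p ∈ LP k := by
  refine Finset.mem_filter.mpr ⟨Finset.mem_product.mpr ⟨Finset.mem_univ _, ?_⟩, hp⟩
  exact Finset.mem_range.mpr (Nat.lt_succ_of_le (hp.trans (Finset.le_sup (Finset.mem_univ p.1))))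

lemma LP_le {k : C → ℕ} {p : C × ℕ} (hp : p ∈ LP k) : p.2 ≤ k p.1 :=
  (Finset.mem_filter.mp hp).2

lemma match_exists {k : C → ℕ} {u₁ u₂ : C → NNReal} (h : RegionEquiv k u₁ u₂)
    (Δ : ℝ) (hΔ : 0 ≤ Δ) : ∃ s : ℝ, 0 ≤ s ∧ MatchD k u₁ u₂ Δ s := by
  by_cases hE : ∃ p ∈ LP k, fval u₁ p = Δ
  · obtain ⟨p₀, hp₀, hfp₀⟩ := hE
    have hp0k := LP_le hp₀
    refine ⟨fval u₂ p₀, ?_, ?_⟩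
    · by_contra hneg
      push_neg at hneg
      have := (zero' h hp0k).1.mpr hneg
      linarith
    · intro q hq
      have o := ord' h hp0k hq
      refine tri_of ?_ ?_
      · rw [← hfp₀]; exact o.1
      · rw [← hfp₀]; exact o.2
  · set A := (LP k).filter (fun p => fval u₁ p < Δ) with hA
    set G := (LP k).filter (fun p => Δ < fval u₁ p) with hG
    have hmemAG : ∀ p ∈ LP k, p ∈ A ∨ p ∈ G := by
      intro p hp
      rcases lt_trichotomy (fval u₁ p) Δ with hlt | heq | hgt
      · exact Or.inl (Finset.mem_filter.mpr ⟨hp, hlt⟩)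
      · exact absurd ⟨p, hp, heq⟩ hE
      · exact Or.inr (Finset.mem_filter.mpr ⟨hp, hgt⟩)
    have hSne : (insert (0:ℝ) (A.image (fval u₂))).Nonempty := ⟨0, Finset.mem_insert_self _ _⟩
    set a := (insert (0:ℝ) (A.image (fval u₂))).max' hSne with ha
    have ha0 : 0 ≤ a := Finset.le_max' _ _ (Finset.mem_insert_self _ _)
    have haA : ∀ p ∈ A, fval u₂ p ≤ a := fun p hp =>
      Finset.le_max' _ _ (Finset.mem_insert_of_mem (Finset.mem_image_of_mem _ hp))
    have haG : ∀ p ∈ G, a < fval u₂ p := by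
      intro p hp
      have hpG := Finset.mem_filter.mp hp
      have hp2 : Δ < fval u₁ p := hpG.2
      have hpk := LP_le hpG.1
      have hgpos : 0 < fval u₂ p := (zero' h hpk).2.2.mp (by linarith)
      have hmem := Finset.max'_mem _ hSne
      rw [← ha] at hmem
      rcases Finset.mem_insert.mp hmem with h0 | himg
      · rw [h0]; exact hgpos
      · obtain ⟨q, hqA, hqa⟩ := Finset.mem_image.mp himg
        have hqf := Finset.mem_filter.mp hqA
        have hlt : fval u₁ q < fval u₁ p := by linarith [hqf.2]
        have := (ord' h (LP_le hqf.1) hpk).1.mp hlt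
        rw [← hqa]; exact this
    by_cases hGne : G.Nonempty
    · have hGimg : (G.image (fval u₂)).Nonempty := hGne.image _
      set b := (G.image (fval u₂)).min' hGimg with hb
      have hbG : ∀ p ∈ G, b ≤ fval u₂ p := fun p hp =>
        Finset.min'_le _ _ (Finset.mem_image_of_mem _ hp)
      have hab : a < b := by
        obtain ⟨q, hqG, hqb⟩ := Finset.mem_image.mp (Finset.min'_mem _ hGimg)
        rw [hb, ← hqb]; exact haG q hqG
      refine ⟨(a + b) / 2, by linarith, ?_⟩
      intro q hq
      rcases hmemAG q (mem_LP hq) with hqA | hqG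
      · have h1 : fval u₁ q < Δ := (Finset.mem_filter.mp hqA).2
        have h2 : fval u₂ q ≤ a := haA q hqA
        exact ⟨iff_of_false (by linarith) (by linarith),
               iff_of_false (by intro he; linarith) (by intro he; linarith),
               iff_of_true h1 (by linarith)⟩
      · have h1 : Δ < fval u₁ q := (Finset.mem_filter.mp hqG).2
        have h2 : b ≤ fval u₂ q := hbG q hqG
        exact ⟨iff_of_true h1 (by linarith),
               iff_of_false (by intro he; linarith) (by intro he; linarith),
               iff_of_false (by linarith) (by linarith)⟩
    · refine ⟨a + 1, by linarith, ?_⟩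
      intro q hq
      rcases hmemAG q (mem_LP hq) with hqA | hqG
      · have h1 : fval u₁ q < Δ := (Finset.mem_filter.mp hqA).2
        have h2 : fval u₂ q ≤ a := haA q hqA
        exact ⟨iff_of_false (by linarith) (by linarith),
               iff_of_false (by intro he; linarith) (by intro he; linarith),
               iff_of_true h1 (by linarith)⟩
      · rw [Finset.not_nonempty_iff_eq_empty.mp hGne] at hqG
        exact absurd hqG (Finset.notMem_empty q)

lemma match_le {k : C → ℕ} {u₁ u₂ : C → NNReal} (h : RegionEquiv k u₁ u₂)
    {Δ Δ' δ' : ℝ} (hΔ : 0 ≤ Δ) (hM : MatchD k u₁ u₂ Δ Δ')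
    (hδ'0 : 0 ≤ δ') (hδ' : δ' ≤ Δ') :
    ∃ δ : ℝ, 0 ≤ δ ∧ δ ≤ Δ ∧ MatchD k u₁ u₂ δ δ' := by
  by_cases hE : ∃ p ∈ LP k, fval u₂ p = δ'
  · obtain ⟨p₀, hp₀, hfp₀⟩ := hE
    have hp0k := LP_le hp₀
    refine ⟨fval u₁ p₀, ?_, ?_, ?_⟩
    · by_contra hneg
      push_neg at hneg
      have := (zero' h hp0k).1.mp hneg
      linarith
    · have t := hM p₀ hp0k
      have hgle : fval u₂ p₀ ≤ Δ' := by rw [hfp₀]; exact hδ'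
      rcases lt_or_eq_of_le hgle with hlt | heq
      · exact le_of_lt (t.2.2.mpr hlt)
      · exact le_of_eq (t.2.1.mpr heq.symm).symm
    · intro q hq
      have o := ord' h hp0k hq
      refine tri_of ?_ ?_
      · rw [← hfp₀]; exact o.1
      · rw [← hfp₀]; exact o.2
  · set A := (LP k).filter (fun p => fval u₂ p < δ') with hA
    set G := (LP k).filter (fun p => δ' < fval u₂ p) with hG
    have hmemAG : ∀ p ∈ LP k, p ∈ A ∨ p ∈ G := by
      intro p hp
      rcases lt_trichotomy (fval u₂ p) δ' with hlt | heq | hgt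
      · exact Or.inl (Finset.mem_filter.mpr ⟨hp, hlt⟩)
      · exact absurd ⟨p, hp, heq⟩ hE
      · exact Or.inr (Finset.mem_filter.mpr ⟨hp, hgt⟩)
    have hAΔ : ∀ p ∈ A, fval u₁ p < Δ := by
      intro p hp
      have hpf := Finset.mem_filter.mp hp
      exact (hM p (LP_le hpf.1)).2.2.mpr (by linarith [hpf.2])
    have hSne : (insert (0:ℝ) (A.image (fval u₁))).Nonempty := ⟨0, Finset.mem_insert_self _ _⟩
    set a := (insert (0:ℝ) (A.image (fval u₁))).max' hSne with ha
    have ha0 : 0 ≤ a := Finset.le_max' _ _ (Finset.mem_insert_self _ _)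
    have haA : ∀ p ∈ A, fval u₁ p ≤ a := fun p hp =>
      Finset.le_max' _ _ (Finset.mem_insert_of_mem (Finset.mem_image_of_mem _ hp))
    have haΔ : a ≤ Δ := by
      have hmem := Finset.max'_mem _ hSne
      rw [← ha] at hmem
      rcases Finset.mem_insert.mp hmem with h0 | himg
      · rw [h0]; exact hΔ
      · obtain ⟨q, hqA, hqa⟩ := Finset.mem_image.mp himg
        rw [← hqa]; exact le_of_lt (hAΔ q hqA)
    have haG : ∀ p ∈ G, a < fval u₁ p := by
      intro p hp
      have hpG := Finset.mem_filter.mp hp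
      have hp2 : δ' < fval u₂ p := hpG.2
      have hpk := LP_le hpG.1
      have hfpos : 0 < fval u₁ p := (zero' h hpk).2.2.mpr (by linarith)
      have hmem := Finset.max'_mem _ hSne
      rw [← ha] at hmem
      rcases Finset.mem_insert.mp hmem with h0 | himg
      · rw [h0]; exact hfpos
      · obtain ⟨q, hqA, hqa⟩ := Finset.mem_image.mp himg
        have hqf := Finset.mem_filter.mp hqA
        have hlt : fval u₂ q < fval u₂ p := by linarith [hqf.2]
        have := (ord' h (LP_le hqf.1) hpk).1.mpr hlt
        rw [← hqa]; exact this
    by_cases hGne : G.Nonempty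
    · have hGimg : (G.image (fval u₁)).Nonempty := hGne.image _
      set b := (G.image (fval u₁)).min' hGimg with hb
      have hbG : ∀ p ∈ G, b ≤ fval u₁ p := fun p hp =>
        Finset.min'_le _ _ (Finset.mem_image_of_mem _ hp)
      have hab : a < b := by
        obtain ⟨q, hqG, hqb⟩ := Finset.mem_image.mp (Finset.min'_mem _ hGimg)
        rw [hb, ← hqb]; exact haG q hqG
      refine ⟨min Δ ((a + b) / 2), le_min hΔ (by linarith), min_le_left _ _, ?_⟩
      intro q hq
      rcases hmemAG q (mem_LP hq) with hqA | hqG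
      · have h1 : fval u₂ q < δ' := (Finset.mem_filter.mp hqA).2
        have h2 : fval u₁ q ≤ a := haA q hqA
        have hlt : fval u₁ q < min Δ ((a + b) / 2) := lt_min (hAΔ q hqA) (by linarith)
        exact ⟨iff_of_false (not_lt.mpr hlt.le) (not_lt.mpr h1.le),
               iff_of_false (by intro he; linarith) (by intro he; linarith),
               iff_of_true hlt h1⟩
      · have h1 : δ' < fval u₂ q := (Finset.mem_filter.mp hqG).2
        have h2 : b ≤ fval u₁ q := hbG q hqG
        have hlt : min Δ ((a + b) / 2) < fval u₁ q :=
          lt_of_le_of_lt (min_le_right _ _) (by linarith)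
        exact ⟨iff_of_true hlt h1,
               iff_of_false (by intro he; linarith) (by intro he; linarith),
               iff_of_false (not_lt.mpr hlt.le) (not_lt.mpr h1.le)⟩
    · refine ⟨min Δ (a + 1), le_min hΔ (by linarith), min_le_left _ _, ?_⟩
      intro q hq
      rcases hmemAG q (mem_LP hq) with hqA | hqG
      · have h1 : fval u₂ q < δ' := (Finset.mem_filter.mp hqA).2
        have h2 : fval u₁ q ≤ a := haA q hqA
        have hlt : fval u₁ q < min Δ (a + 1) := lt_min (hAΔ q hqA) (by linarith)
        exact ⟨iff_of_false (not_lt.mpr hlt.le) (not_lt.mpr h1.le),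
               iff_of_false (by intro he; linarith) (by intro he; linarith),
               iff_of_true hlt h1⟩
      · rw [Finset.not_nonempty_iff_eq_empty.mp hGne] at hqG
        exact absurd hqG (Finset.notMem_empty q)

lemma main_dir {k : C → ℕ} {φ₁ φ₂ : CC C} (h₁ : Bounded k φ₁) (h₂ : Bounded k φ₂)
    {u₁ u₂ : C → NNReal} (h : RegionEquiv k u₁ u₂) :
    (∃ Δ : NNReal, sat (shift u₁ Δ) φ₁ ∧ ∀ δ ≤ Δ, sat (shift u₁ δ) φ₂) →
    (∃ Δ : NNReal, sat (shift u₂ Δ) φ₁ ∧ ∀ δ ≤ Δ, sat (shift u₂ δ) φ₂) := by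
  rintro ⟨Δ, hsat, hall⟩
  obtain ⟨s, hs0, hMs⟩ := match_exists h (Δ : ℝ) Δ.coe_nonneg
  refine ⟨s.toNNReal, ?_, ?_⟩
  · have hM' : MatchD k u₁ u₂ (Δ : ℝ) ((s.toNNReal : ℝ)) := by
      rwa [Real.coe_toNNReal _ hs0]
    exact (sat_iff (regionEquiv_shift h hM') φ₁ h₁).mp hsat
  · intro δ' hδ'
    have hδ'le : (δ' : ℝ) ≤ s := by
      have := NNReal.coe_le_coe.mpr hδ'
      rwa [Real.coe_toNNReal _ hs0] at this
    obtain ⟨δ, hδ0, hδΔ, hMδ⟩ := match_le h Δ.coe_nonneg hMs δ'.coe_nonneg hδ'le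
    have hMδ' : MatchD k u₁ u₂ ((δ.toNNReal : ℝ)) ((δ' : ℝ)) := by
      rwa [Real.coe_toNNReal _ hδ0]
    have hle : δ.toNNReal ≤ Δ := by
      rw [← NNReal.coe_le_coe, Real.coe_toNNReal _ hδ0]; exact hδΔ
    exact (sat_iff (regionEquiv_shift h hMδ') φ₂ h₂).mp (hall _ hle)

end DeltaAux

/-- Δ-time invariance: the predicate
  Φ(u) := ∃Δ, (u+Δ ⊨ φ₁) ∧ ∀δ ∈ [0,Δ], (u+δ ⊨ φ₂)
is invariant under extended-region equivalence, for G-clock constraints φ₁, φ₂. -/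
theorem delta_time_invariance {C : Type} [Fintype C] (k : C → ℕ) (φ₁ φ₂ : CC C)
    (h₁ : Bounded k φ₁) (h₂ : Bounded k φ₂)
    (u₁ u₂ : C → NNReal) (h : RegionEquiv k u₁ u₂) :
    (∃ Δ : NNReal, sat (shift u₁ Δ) φ₁ ∧ ∀ δ ≤ Δ, sat (shift u₁ δ) φ₂) ↔
    (∃ Δ : NNReal, sat (shift u₂ Δ) φ₁ ∧ ∀ δ ≤ Δ, sat (shift u₂ δ) φ₂) := by
  exact ⟨main_dir h₁ h₂ h, main_dir h₁ h₂ (regionEquiv_symm h)⟩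
end

section
/- Completeness of the nonblocking predicate: in the semantic graph of a TA G, if a marked state (a state (lm, um) with lm ∈ Lm) is reachable from state (l,u) by a path of j transitions, then u ⊨ Nʲ(l), where Nʲ is the j-th iterate of the nonblocking-predicate operator. -/
/-- An edge of a timed automaton. -/
structure Edge (C L A : Type) where
  src : L
  ev : A
  guard : CC C
  reset : Set C
  tgt : L

/-- A timed automaton over clock type C, location type L and event type A. -/
structure TA (C L A : Type) where
  edges : Set (Edge C L A)
  marked : Set L
  init : L
  inv : L → CC C

/-- One transition of the semantic graph: an event transition (guard satisfied, target
invariant satisfied after reset) or a time transition (invariant holds throughout the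
delay). The source state must satisfy its invariant. -/
def Step {C L A : Type} (G : TA C L A) (s : L × (C → NNReal)) :
    (A ⊕ NNReal) → (L × (C → NNReal)) → Prop
  | Sum.inl a, t =>
      sat s.2 (G.inv s.1) ∧ ∃ e ∈ G.edges, e.src = s.1 ∧ e.ev = a ∧ sat s.2 e.guard ∧
        t.1 = e.tgt ∧ t.2 = resetVal s.2 e.reset ∧ sat t.2 (G.inv e.tgt)
  | Sum.inr Δ, t =>
      t.1 = s.1 ∧ t.2 = shift s.2 Δ ∧ ∀ δ ≤ Δ, sat (shift s.2 δ) (G.inv s.1)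

/-- The semantic (set-valued) iterates of the nonblocking predicate:
`Nset G 0 l` contains the valuations of marked states at `l`; `Nset G (i+1) l` adds the
valuations from which an event transition or a time transition reaches `Nset G i`. -/
def Nset {C L A : Type} (G : TA C L A) : ℕ → L → Set (C → NNReal)
  | 0, l => {u | l ∈ G.marked ∧ sat u (G.inv l)}
  | i + 1, l =>
      Nset G i l ∪
      {u | ∃ e ∈ G.edges, e.src = l ∧ sat u e.guard ∧
            sat (resetVal u e.reset) (G.inv e.tgt) ∧ resetVal u e.reset ∈ Nset G i e.tgt} ∪
      {u | ∃ Δ : NNReal, shift u Δ ∈ Nset G i l ∧ ∀ δ ≤ Δ, sat (shift u δ) (G.inv l)}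

/-- `ReachIn G n s t`: state `t` is reachable from state `s` in exactly `n` transitions
of the semantic graph. -/
inductive ReachIn {C L A : Type} (G : TA C L A) :
    ℕ → (L × (C → NNReal)) → (L × (C → NNReal)) → Prop
  | refl (s) : ReachIn G 0 s s
  | step {n : ℕ} {s t u : L × (C → NNReal)} :
      (∃ a, Step G s a t) → ReachIn G n t u → ReachIn G (n + 1) s u

/-- Completeness of the nonblocking predicate: if a marked state is reachable from the
state (l,u) by a path of j transitions, then u ⊨ Nʲ(l). -/
theorem nonblocking_predicate_complete {C L A : Type} (G : TA C L A)
    (j : ℕ) (l : L) (u : C → NNReal) (lm : L) (um : C → NNReal)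
    (hu : sat u (G.inv l)) (hreach : ReachIn G j (l, u) (lm, um)) (hm : lm ∈ G.marked) :
    u ∈ Nset G j l := by
  induction j generalizing l u with
  | zero =>
    cases hreach
    exact ⟨hm, hu⟩
  | succ n ih =>
    cases hreach with
    | step hstep hrest =>
      rename_i t
      obtain ⟨a, hs⟩ := hstep
      cases a with
      | inl a =>
        obtain ⟨hsat, e, he, hsrc, hev, hg, ht1, ht2, hinv⟩ := hs
        have hIH : t.2 ∈ Nset G n t.1 := by
          have := ih t.1 t.2 (by rw [ht1]; exact hinv) (by
            rw [← Prod.mk.eta (p := t)] at hrest; exact hrest)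
          exact this
        left; right
        refine ⟨e, he, hsrc, hg, ?_, ?_⟩
        · rw [← ht2]; exact hinv
        · rw [ht1, ht2] at hIH; exact hIH
      | inr Δ =>
        obtain ⟨ht1, ht2, hall⟩ := hs
        have hinvt : sat t.2 (G.inv t.1) := by
          rw [ht1, ht2]; exact hall Δ le_rfl
        have hIH : t.2 ∈ Nset G n t.1 := ih t.1 t.2 hinvt (by
          rw [← Prod.mk.eta (p := t)] at hrest; exact hrest)
        right
        refine ⟨Δ, ?_, hall⟩
        rw [ht1, ht2] at hIH
        exact hIH
end

section
/- Soundness of the nonblocking predicate: for any state (l,u) in the semantic graph of a TA G and any i, if u ⊨ Nⁱ(l), then some marked state is reachable from (l,u) in the semantic graph (by a path of at most i transitions). -/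
/-- Soundness of the nonblocking predicate: if u ⊨ Nⁱ(l) for the state (l,u), then a
marked state is reachable from (l,u) by a path of at most i transitions. -/
theorem nonblocking_predicate_sound {C L A : Type} (G : TA C L A)
    (i : ℕ) (l : L) (u : C → NNReal) (hu : sat u (G.inv l)) (hN : u ∈ Nset G i l) :
    ∃ j ≤ i, ∃ t : L × (C → NNReal), ReachIn G j (l, u) t ∧ t.1 ∈ G.marked := by
  induction i generalizing l u with
  | zero =>
    exact ⟨0, le_refl _, (l, u), ReachIn.refl _, hN.1⟩
  | succ i ih =>
    rcases hN with (hN | ⟨e, he, hsrc, hg, hinv', hmem⟩) | ⟨Δ, hmem, hdly⟩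
    · obtain ⟨j, hj, t, hr, hm⟩ := ih l u hu hN
      exact ⟨j, hj.trans (Nat.le_succ i), t, hr, hm⟩
    · obtain ⟨j, hj, t, hr, hm⟩ := ih e.tgt (resetVal u e.reset) hinv' hmem
      refine ⟨j + 1, Nat.succ_le_succ hj, t, ReachIn.step ⟨Sum.inl e.ev, ?_⟩ hr, hm⟩
      exact ⟨hu, e, he, hsrc, rfl, hg, rfl, rfl, hinv'⟩
    · have hinvΔ : sat (shift u Δ) (G.inv l) := hdly Δ (le_refl _)
      obtain ⟨j, hj, t, hr, hm⟩ := ih l (shift u Δ) hinvΔ hmem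
      refine ⟨j + 1, Nat.succ_le_succ hj, t, ReachIn.step ⟨Sum.inr Δ, ?_⟩ hr, hm⟩
      exact ⟨rfl, rfl, hdly⟩
end

section
/- Monotone fixpoint characterization: the nonblocking predicates N(l) := ⋃ᵢ Nⁱ(l) (as sets of valuations) satisfy: u ∈ N(l) iff (l,u) is a nonblocking state of the semantic graph of G, i.e., iff a marked state is reachable from (l,u). -/
lemma Nset_sound {C L A : Type} (G : TA C L A) :
    ∀ i (l : L) (u : C → NNReal), u ∈ Nset G i l → sat u (G.inv l) →
      ∃ t : L × (C → NNReal),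
        Relation.ReflTransGen (fun s t => ∃ a, Step G s a t) (l, u) t ∧ t.1 ∈ G.marked := by
  intro i
  induction i with
  | zero =>
    intro l u hm _
    exact ⟨(l, u), Relation.ReflTransGen.refl, hm.1⟩
  | succ i ih =>
    intro l u hm hu
    rcases hm with (hm | ⟨e, he, hsrc, hg, hinv, hmem⟩) | ⟨Δ, hmem, hdel⟩
    · exact ih l u hm hu
    · obtain ⟨t, ht, htm⟩ := ih e.tgt (resetVal u e.reset) hmem hinv
      refine ⟨t, Relation.ReflTransGen.head ⟨Sum.inl e.ev, ?_⟩ ht, htm⟩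
      exact ⟨hu, e, he, hsrc, rfl, hg, rfl, rfl, hinv⟩
    · obtain ⟨t, ht, htm⟩ := ih l (shift u Δ) hmem (hdel Δ le_rfl)
      exact ⟨t, Relation.ReflTransGen.head (b := (l, shift u Δ))
        ⟨Sum.inr Δ, rfl, rfl, hdel⟩ ht, htm⟩

lemma Nset_complete {C L A : Type} (G : TA C L A) {s t : L × (C → NNReal)}
    (h : Relation.ReflTransGen (fun s t => ∃ a, Step G s a t) s t)
    (htm : t.1 ∈ G.marked) (hs : sat s.2 (G.inv s.1)) :
    ∃ i : ℕ, s.2 ∈ Nset G i s.1 := by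
  induction h using Relation.ReflTransGen.head_induction_on with
  | refl => exact ⟨0, htm, hs⟩
  | head hstep _ ih =>
    rename_i s' mid _
    obtain ⟨a, hstep⟩ := hstep
    match a, hstep with
    | Sum.inl a, ⟨hinv, e, he, hsrc, hev, hg, h1, h2, h3⟩ =>
      obtain ⟨i, hi⟩ := ih (h1 ▸ h3)
      refine ⟨i + 1, Or.inl (Or.inr ⟨e, he, hsrc.symm ▸ rfl, hg, h2 ▸ h3, ?_⟩)⟩
      · rw [← h2]; exact h1 ▸ hi
    | Sum.inr Δ, ⟨h1, h2, h3⟩ =>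
      have hm : sat mid.2 (G.inv mid.1) := by rw [h1, h2]; exact h3 Δ le_rfl
      obtain ⟨i, hi⟩ := ih hm
      have hi' : shift s'.2 Δ ∈ Nset G i s'.1 := by rw [← h1, ← h2]; exact hi
      exact ⟨i + 1, Or.inr ⟨Δ, hi', h3⟩⟩

/-- Fixpoint characterization: u ∈ ⋃ᵢ Nⁱ(l) iff the state (l,u) is nonblocking,
i.e. some marked state is reachable from it in the semantic graph. -/
theorem nonblocking_predicate_characterization {C L A : Type} (G : TA C L A)
    (l : L) (u : C → NNReal) (hu : sat u (G.inv l)) :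
    (∃ i : ℕ, u ∈ Nset G i l) ↔
      ∃ t : L × (C → NNReal),
        Relation.ReflTransGen (fun s t => ∃ a, Step G s a t) (l, u) t ∧ t.1 ∈ G.marked := by
  constructor
  · rintro ⟨i, hi⟩; exact Nset_sound G i l u hi hu
  · rintro ⟨t, ht, htm⟩; exact Nset_complete G ht htm hu
end
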